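/- Let X be an infinite chain with X^0 ≠ ∅. Then every order-preserving self-map of X with finite image is a composition of finitely many order-preserving self-maps each of whose images has cardinality |X|; that is, J_f ⊆ ⟨J⟩. -/

import Mathlib

open Set

namespace Stmt13Aux

variable {Y : Type*} [LinearOrder Y]

def appL (l : List (Y → Y)) : Y → Y := l.foldr (· ∘ ·) id

@[simp] lemma appL_nil : appL ([] : List (Y → Y)) = id := rfl

@[simp] lemma appL_cons (f : Y → Y) (l : List (Y → Y)) :
    appL (f :: l) = f ∘ appL l := rfl

lemma appL_append (l₁ l₂ : List (Y → Y)) (x : Y) :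
    appL (l₁ ++ l₂) x = appL l₁ (appL l₂ x) := by
  induction l₁ with
  | nil => rfl
  | cons f t ih => simp only [List.cons_append, appL_cons, Function.comp_apply, ih]

def IsJ (f : Y → Y) : Prop := Monotone f ∧ Cardinal.mk (Set.range f) = Cardinal.mk Y

lemma isJ_of_subset {f : Y → Y} (hm : Monotone f) {s : Set Y} (hs : s ⊆ Set.range f)
    (hcard : Cardinal.mk s = Cardinal.mk Y) : IsJ f := by
  refine ⟨hm, le_antisymm (Cardinal.mk_set_le _) ?_⟩
  rw [← hcard]
  exact Cardinal.mk_le_mk_of_subset hs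

lemma mk_Ioi_eq [Infinite Y] {x₀ : Y} (h : Cardinal.mk (Set.Ici x₀) = Cardinal.mk Y) :
    Cardinal.mk (Set.Ioi x₀) = Cardinal.mk Y := by
  refine le_antisymm (Cardinal.mk_set_le _) ?_
  by_contra hlt
  push_neg at hlt
  have h1 : (Set.Ici x₀ : Set Y) = insert x₀ (Set.Ioi x₀) := by
    ext z
    simp only [Set.mem_Ici, Set.mem_insert_iff, Set.mem_Ioi]
    constructor
    · intro hz
      rcases eq_or_lt_of_le hz with h' | h'
      · exact Or.inl h'.symm
      · exact Or.inr h'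
    · rintro (rfl | h')
      · exact le_rfl
      · exact h'.le
  have hinf : Cardinal.aleph0 ≤ Cardinal.mk Y := Cardinal.infinite_iff.mp ‹Infinite Y›
  have h2 : Cardinal.mk (Set.Ici x₀) ≤ Cardinal.mk (Set.Ioi x₀) + 1 := by
    rw [h1]; exact Cardinal.mk_insert_le
  have h3 : Cardinal.mk (Set.Ioi x₀) + 1 < Cardinal.mk Y :=
    Cardinal.add_lt_of_lt hinf hlt (lt_of_lt_of_le Cardinal.one_lt_aleph0 hinf)
  rw [h] at h2
  exact absurd h2 (not_le.mpr h3)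

lemma mk_Iio_eq [Infinite Y] {x₀ : Y} (h : Cardinal.mk (Set.Iic x₀) = Cardinal.mk Y) :
    Cardinal.mk (Set.Iio x₀) = Cardinal.mk Y := by
  refine le_antisymm (Cardinal.mk_set_le _) ?_
  by_contra hlt
  push_neg at hlt
  have h1 : (Set.Iic x₀ : Set Y) = insert x₀ (Set.Iio x₀) := by
    ext z
    simp only [Set.mem_Iic, Set.mem_insert_iff, Set.mem_Iio]
    constructor
    · intro hz
      rcases eq_or_lt_of_le hz with h' | h'
      · exact Or.inl h'
      · exact Or.inr h'
    · rintro (rfl | h')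
      · exact le_rfl
      · exact h'.le
  have hinf : Cardinal.aleph0 ≤ Cardinal.mk Y := Cardinal.infinite_iff.mp ‹Infinite Y›
  have h2 : Cardinal.mk (Set.Iic x₀) ≤ Cardinal.mk (Set.Iio x₀) + 1 := by
    rw [h1]; exact Cardinal.mk_insert_le
  have h3 : Cardinal.mk (Set.Iio x₀) + 1 < Cardinal.mk Y :=
    Cardinal.add_lt_of_lt hinf hlt (lt_of_lt_of_le Cardinal.one_lt_aleph0 hinf)
  rw [h] at h2
  exact absurd h2 (not_le.mpr h3)

/-! ### Basic moving maps -/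

def Dmap (p q : Y) : Y → Y := fun x => if x ≤ p then min x q else x

lemma dmap_mono {p q : Y} (hqp : q ≤ p) : Monotone (Dmap p q) := by
  intro u v huv
  unfold Dmap
  by_cases hu : u ≤ p <;> by_cases hv : v ≤ p
  · simp only [hu, hv, if_true]
    exact min_le_min huv le_rfl
  · simp only [hu, hv, if_true, if_false]
    exact (min_le_right u q).trans (hqp.trans (not_le.mp hv).le)
  · exact absurd (huv.trans hv) hu
  · simp only [hu, hv, if_false]
    exact huv

lemma dmap_apply {p q : Y} (hqp : q ≤ p) : Dmap p q p = q := by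
  simp [Dmap, min_eq_right hqp]

lemma dmap_fix {p q : Y} (hqp : q ≤ p) {z : Y} (hz : z < q ∨ p < z) : Dmap p q z = z := by
  rcases hz with h | h
  · simp [Dmap, h.le.trans hqp, min_eq_left h.le]
  · simp [Dmap, not_le.mpr h]

lemma dmap_range_low {p q : Y} (hqp : q ≤ p) : Set.Iic q ⊆ Set.range (Dmap p q) := by
  intro z hz
  exact ⟨z, by simp [Dmap, (le_trans hz hqp : z ≤ p), min_eq_left (hz : z ≤ q)]⟩

lemma dmap_range_high {p q : Y} : Set.Ioi p ⊆ Set.range (Dmap p q) := by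
  intro z hz
  exact ⟨z, by simp [Dmap, not_le.mpr (hz : p < z)]⟩

def Umap (p q : Y) : Y → Y := fun x => if p ≤ x then max x q else x

lemma umap_mono {p q : Y} (hpq : p ≤ q) : Monotone (Umap p q) := by
  intro u v huv
  unfold Umap
  by_cases hu : p ≤ u <;> by_cases hv : p ≤ v
  · simp only [hu, hv, if_true]
    exact max_le_max huv le_rfl
  · exact absurd (hu.trans huv) hv
  · simp only [hu, hv, if_true, if_false]
    exact ((not_le.mp hu).le.trans (hpq.trans (le_max_right v q)))
  · simp only [hu, hv, if_false]
    exact huv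

lemma umap_apply {p q : Y} (hpq : p ≤ q) : Umap p q p = q := by
  simp [Umap, max_eq_right hpq]

lemma umap_fix {p q : Y} (hpq : p ≤ q) {z : Y} (hz : z < p ∨ q < z) : Umap p q z = z := by
  rcases hz with h | h
  · simp [Umap, not_le.mpr h]
  · simp [Umap, hpq.trans h.le, max_eq_left h.le]

lemma umap_range_high {p q : Y} (hpq : p ≤ q) : Set.Ici q ⊆ Set.range (Umap p q) := by
  intro z hz
  exact ⟨z, by simp [Umap, hpq.trans (hz : q ≤ z), max_eq_left (hz : q ≤ z)]⟩

lemma umap_range_low {p q : Y} : Set.Iio p ⊆ Set.range (Umap p q) := by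
  intro z hz
  exact ⟨z, by simp [Umap, not_le.mpr (hz : z < p)]⟩

/-! ### Single moves -/

lemma move_down [Infinite Y] (x₀ : Y)
    (hlo : Cardinal.mk (Set.Iic x₀) = Cardinal.mk Y)
    (hhi : Cardinal.mk (Set.Ici x₀) = Cardinal.mk Y)
    (p q : Y) (hqp : q ≤ p) :
    ∃ l : List (Y → Y), (∀ f ∈ l, IsJ f) ∧ appL l p = q ∧
      ∀ z, (z < q ∨ p < z) → appL l z = z := by
  by_cases h1 : Cardinal.mk (Set.Iic q) = Cardinal.mk Y
  · refine ⟨[Dmap p q], ?_, ?_, ?_⟩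
    · intro f hf
      rcases List.mem_singleton.mp hf with rfl
      exact isJ_of_subset (dmap_mono hqp) (dmap_range_low hqp) h1
    · show Dmap p q p = q
      exact dmap_apply hqp
    · intro z hz
      show Dmap p q z = z
      exact dmap_fix hqp hz
  by_cases h2 : Cardinal.mk (Set.Ioi p) = Cardinal.mk Y
  · refine ⟨[Dmap p q], ?_, ?_, ?_⟩
    · intro f hf
      rcases List.mem_singleton.mp hf with rfl
      exact isJ_of_subset (dmap_mono hqp) (dmap_range_high) h2
    · exact dmap_apply hqp
    · intro z hz
      exact dmap_fix hqp hz
  · have hq : q < x₀ := by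
      by_contra h
      push_neg at h
      refine h1 (le_antisymm (Cardinal.mk_set_le _) ?_)
      rw [← hlo]
      exact Cardinal.mk_le_mk_of_subset (Set.Iic_subset_Iic.mpr h)
    have hp : x₀ ≤ p := by
      by_contra h
      push_neg at h
      refine h2 (le_antisymm (Cardinal.mk_set_le _) ?_)
      rw [← hhi]
      exact Cardinal.mk_le_mk_of_subset (fun z hz => lt_of_lt_of_le h hz)
    refine ⟨[Dmap x₀ q, Dmap p x₀], ?_, ?_, ?_⟩
    · intro f hf
      rcases List.mem_cons.mp hf with rfl | hf
      · exact isJ_of_subset (dmap_mono hq.le) dmap_range_high (mk_Ioi_eq hhi)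
      · rcases List.mem_singleton.mp hf with rfl
        exact isJ_of_subset (dmap_mono hp) (dmap_range_low hp) hlo
    · show Dmap x₀ q (Dmap p x₀ p) = q
      rw [dmap_apply hp, dmap_apply hq.le]
    · intro z hz
      show Dmap x₀ q (Dmap p x₀ z) = z
      rcases hz with h | h
      · rw [dmap_fix hp (Or.inl (h.trans hq)), dmap_fix hq.le (Or.inl h)]
      · rw [dmap_fix hp (Or.inr h), dmap_fix hq.le (Or.inr (lt_of_le_of_lt hp h))]

lemma move_up [Infinite Y] (x₀ : Y)
    (hlo : Cardinal.mk (Set.Iic x₀) = Cardinal.mk Y)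
    (hhi : Cardinal.mk (Set.Ici x₀) = Cardinal.mk Y)
    (p q : Y) (hpq : p ≤ q) :
    ∃ l : List (Y → Y), (∀ f ∈ l, IsJ f) ∧ appL l p = q ∧
      ∀ z, (z < p ∨ q < z) → appL l z = z := by
  by_cases h1 : Cardinal.mk (Set.Ici q) = Cardinal.mk Y
  · refine ⟨[Umap p q], ?_, ?_, ?_⟩
    · intro f hf
      rcases List.mem_singleton.mp hf with rfl
      exact isJ_of_subset (umap_mono hpq) (umap_range_high hpq) h1
    · exact umap_apply hpq
    · intro z hz
      exact umap_fix hpq hz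
  by_cases h2 : Cardinal.mk (Set.Iio p) = Cardinal.mk Y
  · refine ⟨[Umap p q], ?_, ?_, ?_⟩
    · intro f hf
      rcases List.mem_singleton.mp hf with rfl
      exact isJ_of_subset (umap_mono hpq) umap_range_low h2
    · exact umap_apply hpq
    · intro z hz
      exact umap_fix hpq hz
  · have hq : x₀ < q := by
      by_contra h
      push_neg at h
      refine h1 (le_antisymm (Cardinal.mk_set_le _) ?_)
      rw [← hhi]
      exact Cardinal.mk_le_mk_of_subset (Set.Ici_subset_Ici.mpr h)
    have hp : p ≤ x₀ := by
      by_contra h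
      push_neg at h
      refine h2 (le_antisymm (Cardinal.mk_set_le _) ?_)
      rw [← hlo]
      exact Cardinal.mk_le_mk_of_subset (fun z hz => lt_of_le_of_lt hz h)
    refine ⟨[Umap x₀ q, Umap p x₀], ?_, ?_, ?_⟩
    · intro f hf
      rcases List.mem_cons.mp hf with rfl | hf
      · exact isJ_of_subset (umap_mono hq.le) umap_range_low (mk_Iio_eq hlo)
      · rcases List.mem_singleton.mp hf with rfl
        exact isJ_of_subset (umap_mono hp) (umap_range_high hp) hhi
    · show Umap x₀ q (Umap p x₀ p) = q
      rw [umap_apply hp, umap_apply hq.le]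
    · intro z hz
      show Umap x₀ q (Umap p x₀ z) = z
      rcases hz with h | h
      · rw [umap_fix hp (Or.inl h), umap_fix hq.le (Or.inl (lt_of_lt_of_le h hp))]
      · rw [umap_fix hp (Or.inr (hq.trans h)), umap_fix hq.le (Or.inr h)]

/-! ### Chains of moves -/

lemma dchain [Infinite Y] (x₀ : Y)
    (hlo : Cardinal.mk (Set.Iic x₀) = Cardinal.mk Y)
    (hhi : Cardinal.mk (Set.Ici x₀) = Cardinal.mk Y) :
    ∀ (L : List (Y × Y)), L.Pairwise (fun a b => a.1 < b.1 ∧ a.2 < b.2) →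
    (∀ pr ∈ L, pr.2 ≤ pr.1) →
    ∃ l : List (Y → Y), (∀ f ∈ l, IsJ f) ∧ (∀ pr ∈ L, appL l pr.1 = pr.2) ∧
      ∀ z, (∀ pr ∈ L, z < pr.2 ∨ pr.1 < z) → appL l z = z := by
  intro L
  induction L with
  | nil =>
    intro _ _
    exact ⟨[], by simp, by simp, fun z _ => rfl⟩
  | cons pr rest ih =>
    intro hpw hdown
    obtain ⟨hhead, hrest⟩ := List.pairwise_cons.mp hpw
    obtain ⟨l₁, hJ₁, happ₁, hfix₁⟩ :=
      move_down x₀ hlo hhi pr.1 pr.2 (hdown pr (List.mem_cons_self))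
    obtain ⟨l₂, hJ₂, happ₂, hfix₂⟩ :=
      ih hrest (fun pr' h => hdown pr' (List.mem_cons_of_mem _ h))
    refine ⟨l₂ ++ l₁, ?_, ?_, ?_⟩
    · intro f hf
      rcases List.mem_append.mp hf with h | h
      exacts [hJ₂ f h, hJ₁ f h]
    · intro pr' hpr'
      rcases List.mem_cons.mp hpr' with rfl | h
      · rw [appL_append, happ₁]
        exact hfix₂ _ (fun pr'' h'' => Or.inl (hhead pr'' h'').2)
      · rw [appL_append, hfix₁ _ (Or.inr (hhead pr' h).1), happ₂ pr' h]
    · intro z hz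
      rw [appL_append, hfix₁ _ (hz pr (List.mem_cons_self)),
        hfix₂ _ (fun pr' h => hz pr' (List.mem_cons_of_mem _ h))]

lemma uchain [Infinite Y] (x₀ : Y)
    (hlo : Cardinal.mk (Set.Iic x₀) = Cardinal.mk Y)
    (hhi : Cardinal.mk (Set.Ici x₀) = Cardinal.mk Y) :
    ∀ (L : List (Y × Y)), L.Pairwise (fun a b => a.1 < b.1 ∧ a.2 < b.2) →
    (∀ pr ∈ L, pr.1 ≤ pr.2) →
    ∃ l : List (Y → Y), (∀ f ∈ l, IsJ f) ∧ (∀ pr ∈ L, appL l pr.1 = pr.2) ∧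
      ∀ z, (∀ pr ∈ L, z < pr.1 ∨ pr.2 < z) → appL l z = z := by
  intro L
  induction L with
  | nil =>
    intro _ _
    exact ⟨[], by simp, by simp, fun z _ => rfl⟩
  | cons pr rest ih =>
    intro hpw hup
    obtain ⟨hhead, hrest⟩ := List.pairwise_cons.mp hpw
    obtain ⟨l₁, hJ₁, happ₁, hfix₁⟩ :=
      move_up x₀ hlo hhi pr.1 pr.2 (hup pr (List.mem_cons_self))
    obtain ⟨l₂, hJ₂, happ₂, hfix₂⟩ :=
      ih hrest (fun pr' h => hup pr' (List.mem_cons_of_mem _ h))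
    refine ⟨l₁ ++ l₂, ?_, ?_, ?_⟩
    · intro f hf
      rcases List.mem_append.mp hf with h | h
      exacts [hJ₁ f h, hJ₂ f h]
    · intro pr' hpr'
      rcases List.mem_cons.mp hpr' with rfl | h
      · rw [appL_append, hfix₂ _ (fun pr'' h'' => Or.inl (hhead pr'' h'').1), happ₁]
      · rw [appL_append, happ₂ pr' h, hfix₁ _ (Or.inr (hhead pr' h).2)]
    · intro z hz
      rw [appL_append, hfix₂ _ (fun pr' h => hz pr' (List.mem_cons_of_mem _ h)),
        hfix₁ _ (hz pr (List.mem_cons_self))]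

end Stmt13Aux

open Stmt13Aux

theorem stmt_13 {X : Type*} [LinearOrder X] [Infinite X]
    (hX0 : ∃ x : X, Cardinal.mk ↥(Set.Iic x) = Cardinal.mk X ∧
      Cardinal.mk ↥(Set.Ici x) = Cardinal.mk X)
    (α : X → X) (hα : Monotone α) (hfin : (Set.range α).Finite) :
    ∃ l : List (X → X), l ≠ [] ∧
      (∀ f ∈ l, Monotone f ∧ Cardinal.mk ↥(Set.range f) = Cardinal.mk X) ∧
      α = l.foldr (· ∘ ·) id := by
  classical
  obtain ⟨x₀, hlo, hhi⟩ := hX0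
  -- a choice of preimage points, sending α x₀ to x₀
  set e : X → X := fun a =>
    if a = α x₀ then x₀ else if h : ∃ y, α y = a then h.choose else x₀ with he_def
  have he_apply : ∀ a ∈ Set.range α, α (e a) = a := by
    intro a ha
    by_cases h : a = α x₀
    · rw [he_def]
      simp only [if_pos h]
      exact h.symm
    · obtain ⟨y, hy⟩ := ha
      have hex : ∃ y, α y = a := ⟨y, hy⟩
      simp only [he_def, if_neg h, dif_pos hex]
      exact hex.choose_spec
  have he_x0 : e (α x₀) = x₀ := by simp [he_def]
  have he_strict : ∀ a ∈ Set.range α, ∀ b ∈ Set.range α, a < b → e a < e b := by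
    intro a ha b hb hab
    by_contra h
    push_neg at h
    have h2 := hα h
    rw [he_apply a ha, he_apply b hb] at h2
    exact absurd h2 (not_le.mpr hab)
  have he_mono : ∀ {u v : X}, α u ≤ α v → e (α u) ≤ e (α v) := by
    intro u v h
    rcases eq_or_lt_of_le h with h' | h'
    · rw [h']
    · exact (he_strict _ ⟨u, rfl⟩ _ ⟨v, rfl⟩ h').le
  -- the marker maps
  set w1 : X → X := fun x => if x ≤ x₀ then x else e (α x) with hw1
  set w2 : X → X := fun x => if x₀ ≤ x then x else e (α x) with hw2
  have hx0e_le : ∀ {x : X}, x₀ ≤ x → x₀ ≤ e (α x) := by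
    intro x hx
    have := he_mono (hα hx)
    rwa [he_x0] at this
  have hx0e_ge : ∀ {x : X}, x ≤ x₀ → e (α x) ≤ x₀ := by
    intro x hx
    have := he_mono (hα hx)
    rwa [he_x0] at this
  have hw1m : Monotone w1 := by
    intro u v huv
    simp only [hw1]
    by_cases hu : u ≤ x₀ <;> by_cases hv : v ≤ x₀
    · simpa [hu, hv] using huv
    · simp only [if_pos hu, if_neg hv]
      exact hu.trans (hx0e_le (not_le.mp hv).le)
    · exact absurd (huv.trans hv) hu
    · simp only [if_neg hu, if_neg hv]
      exact he_mono (hα huv)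
  have hw2m : Monotone w2 := by
    intro u v huv
    simp only [hw2]
    by_cases hu : x₀ ≤ u <;> by_cases hv : x₀ ≤ v
    · simpa [hu, hv] using huv
    · exact absurd (hu.trans huv) hv
    · simp only [if_neg hu, if_pos hv]
      exact (hx0e_ge (not_le.mp hu).le).trans hv
    · simp only [if_neg hu, if_neg hv]
      exact he_mono (hα huv)
  have hw1J : IsJ w1 := by
    refine isJ_of_subset hw1m (s := Set.Iic x₀) (fun z hz => ⟨z, ?_⟩) hlo
    have hz' : z ≤ x₀ := hz
    show (if z ≤ x₀ then z else e (α z)) = z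
    rw [if_pos hz']
  have hw2J : IsJ w2 := by
    refine isJ_of_subset hw2m (s := Set.Ici x₀) (fun z hz => ⟨z, ?_⟩) hhi
    have hz' : x₀ ≤ z := hz
    show (if x₀ ≤ z then z else e (α z)) = z
    rw [if_pos hz']
  have hv : ∀ x, w2 (w1 x) = e (α x) := by
    intro x
    by_cases hx : x ≤ x₀
    · simp only [hw1, if_pos hx, hw2]
      by_cases hx' : x₀ ≤ x
      · have : x = x₀ := le_antisymm hx hx'
        rw [if_pos hx', this, he_x0]
      · rw [if_neg hx']
    · have hx' : x₀ ≤ e (α x) := hx0e_le (not_le.mp hx).le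
      simp only [hw1, if_neg hx, hw2, if_pos hx']
  -- sorted list of values
  set A : List X := hfin.toFinset.sort (· ≤ ·) with hA
  have hA_sorted : A.Pairwise (· < ·) := List.sortedLT_iff_pairwise.mp hfin.toFinset.sortedLT_sort
  have hA_mem : ∀ {a : X}, a ∈ A ↔ a ∈ Set.range α := by
    intro a
    rw [hA, Finset.mem_sort, Set.Finite.mem_toFinset]
  -- split into down-movers and up-movers
  set LD : List X := A.filter (fun a => a ≤ e a) with hLD
  set LU : List X := A.filter (fun a => ¬ (a ≤ e a)) with hLU
  have hLD_mem : ∀ {a : X}, a ∈ LD → a ∈ A ∧ a ≤ e a := by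
    intro a h
    have := List.mem_filter.mp h
    exact ⟨this.1, by simpa using this.2⟩
  have hLU_mem : ∀ {a : X}, a ∈ LU → a ∈ A ∧ ¬ (a ≤ e a) := by
    intro a h
    have := List.mem_filter.mp h
    exact ⟨this.1, by simpa using this.2⟩
  have hpair : ∀ (l : List X), (∀ {a : X}, a ∈ l → a ∈ A) → l.Pairwise (· < ·) →
      (l.map (fun a => (e a, a))).Pairwise (fun a b => a.1 < b.1 ∧ a.2 < b.2) := by
    intro l hmem hpw
    rw [List.pairwise_map]
    refine hpw.imp_of_mem ?_
    intro a b ha hb hab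
    exact ⟨he_strict a (hA_mem.mp (hmem ha)) b (hA_mem.mp (hmem hb)) hab, hab⟩
  obtain ⟨ld, hldJ, hldr, hldfix⟩ :=
    dchain x₀ hlo hhi (LD.map (fun a => (e a, a)))
      (hpair LD (fun h => (hLD_mem h).1) (hA_sorted.filter _))
      (by
        intro pr hpr
        obtain ⟨a, ha, rfl⟩ := List.mem_map.mp hpr
        exact (hLD_mem ha).2)
  obtain ⟨lu, hluJ, hlur, hlufix⟩ :=
    uchain x₀ hlo hhi (LU.map (fun a => (e a, a)))
      (hpair LU (fun h => (hLU_mem h).1) (hA_sorted.filter _))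
      (by
        intro pr hpr
        obtain ⟨a, ha, rfl⟩ := List.mem_map.mp hpr
        exact (not_le.mp (hLU_mem ha).2).le)
  have hg : ∀ a ∈ A, appL lu (appL ld (e a)) = a := by
    intro a haA
    have har : a ∈ Set.range α := hA_mem.mp haA
    by_cases hd : a ≤ e a
    · have haLD : a ∈ LD := by
        rw [hLD, List.mem_filter]
        exact ⟨haA, by simpa using hd⟩
      have h1 : appL ld (e a) = a :=
        hldr (e a, a) (List.mem_map.mpr ⟨a, haLD, rfl⟩)
      rw [h1]
      refine hlufix a ?_
      intro pr hpr
      obtain ⟨b, hbLU, rfl⟩ := List.mem_map.mp hpr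
      obtain ⟨hbA, hbup⟩ := hLU_mem hbLU
      have hbr : b ∈ Set.range α := hA_mem.mp hbA
      rcases lt_trichotomy b a with h | h | h
      · exact Or.inr h
      · exact absurd (h ▸ hd) hbup
      · exact Or.inl (lt_of_le_of_lt hd (he_strict a har b hbr h))
    · have hup : e a < a := not_le.mp hd
      have haLU : a ∈ LU := by
        rw [hLU, List.mem_filter]
        exact ⟨haA, by simpa using hd⟩
      have h1 : appL ld (e a) = e a := by
        refine hldfix (e a) ?_
        intro pr hpr
        obtain ⟨b, hbLD, rfl⟩ := List.mem_map.mp hpr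
        obtain ⟨hbA, hbd⟩ := hLD_mem hbLD
        have hbr : b ∈ Set.range α := hA_mem.mp hbA
        rcases lt_trichotomy a b with h | h | h
        · exact Or.inl (hup.trans h)
        · exact absurd (h ▸ hbd) hd
        · exact Or.inr (he_strict b hbr a har h)
      rw [h1]
      exact hlur (e a, a) (List.mem_map.mpr ⟨a, haLU, rfl⟩)
  refine ⟨lu ++ ld ++ [w2, w1], by simp, ?_, ?_⟩
  · intro f hf
    simp only [List.mem_append, List.mem_cons, List.mem_singleton] at hf
    rcases hf with (hf | hf) | rfl | rfl | hf
    · exact hluJ f hf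
    · exact hldJ f hf
    · exact hw2J
    · exact hw1J
    · exact absurd hf List.not_mem_nil
  · funext x
    have h0 : (lu ++ ld ++ [w2, w1]).foldr (· ∘ ·) id x
        = appL lu (appL ld (w2 (w1 x))) := by
      show appL ((lu ++ ld) ++ [w2, w1]) x = _
      rw [appL_append, appL_append]
      rfl
    rw [h0, hv x, hg (α x) (hA_mem.mpr ⟨x, rfl⟩)]
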